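/- Let d₁, d₂ ≥ 2 be coprime integers, neither congruent to 0 mod 4, and a₁, a₂ nonzero elements of F_q. Then x^{d₁d₂} - a₁^{d₂} a₂^{d₁} is irreducible over F_q if and only if both x^{d₁} - a₁ and x^{d₂} - a₂ are irreducible over F_q. -/

import Mathlib

open Polynomial

/-- `iter f n` is the n-th iterate of `f` under composition, with `iter f 0 = X`. -/
noncomputable def iter {F : Type*} [Field F] (f : F[X]) : ℕ → F[X]
  | 0 => X
  | n + 1 => (iter f n).comp f

/-- `P d a n` is the value `P_n(a)` where `P_1(x) = x` and
`P_n(x) = P_{n-1}(x)^d + (-1)^(d-1) x` for `n ≥ 2`. (`P d a 0` is junk, set to `a`.) -/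
def P {F : Type*} [Field F] (d : ℕ) (a : F) : ℕ → F
  | 0 => a
  | 1 => a
  | n + 2 => (P d a (n + 1)) ^ d + (-1 : F) ^ (d - 1) * a

section Aux
open IntermediateField AdjoinRoot
universe u
variable {K : Type u} [Field K]

theorem my_even_irr {m : ℕ} (hm : Odd m) {a : K}
    (ha : ∀ p : ℕ, p.Prime → p ∣ 2 * m → ∀ b : K, b ^ p ≠ a) :
    Irreducible (X ^ (2 * m) - C a) := by
  rw [mul_comm]
  apply X_pow_mul_sub_C_irreducible
    (X_pow_sub_C_irreducible_of_prime Nat.prime_two (ha 2 Nat.prime_two (dvd_mul_right 2 m)))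
  intro E _ _ x hx
  have hint : IsIntegral K x := not_not.mp fun h ↦ by
    simpa only [degree_zero, degree_X_pow_sub_C two_pos, WithBot.natCast_ne_bot]
      using congr_arg degree (hx.symm.trans (dif_neg h))
  apply X_pow_sub_C_irreducible_of_odd hm
  intro p hp hpm b hb
  have hp2 : p ≠ 2 := by rintro rfl; rw [Nat.odd_iff] at hm; omega
  have hodd : Odd p := hp.odd_of_ne_two hp2
  apply ha p hp (Dvd.dvd.mul_left hpm 2) (-(Algebra.norm K b))
  have key : (Algebra.norm K b) ^ p = -a := by
    rw [← map_pow, hb, ← adjoin.powerBasis_gen hint,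
      Algebra.PowerBasis.norm_gen_eq_coeff_zero_minpoly]
    simp [minpoly_gen, hx]
  rw [hodd.neg_pow, key, neg_neg]

theorem my_crit {n : ℕ} (hn : n ≠ 0) (h4 : ¬ 4 ∣ n) {a : K} :
    Irreducible (X ^ n - C a) ↔ ∀ p : ℕ, p.Prime → p ∣ n → ∀ b : K, b ^ p ≠ a := by
  constructor
  · exact fun e p hp hpn ↦ pow_ne_of_irreducible_X_pow_sub_C e hpn hp.ne_one
  · intro ha
    rcases Nat.even_or_odd n with he | ho
    · obtain ⟨m, rfl⟩ : 2 ∣ n := he.two_dvd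
      have hm : Odd m := by rw [Nat.odd_iff]; omega
      exact my_even_irr hm ha
    · exact X_pow_sub_C_irreducible_of_odd ho ha

theorem my_range {p e : ℕ} (hp : p.Prime) (hpe : ¬ p ∣ e) {x y : K} (hx : x ≠ 0) (hy : y ≠ 0)
    (hyp : y ∈ Set.range (· ^ p : K → K)) :
    (x ^ e * y ∈ Set.range (· ^ p : K → K)) ↔ x ∈ Set.range (· ^ p : K → K) := by
  have hc : Nat.Coprime e p := Nat.coprime_comm.mp (hp.coprime_iff_not_dvd.mpr hpe)
  constructor
  · intro ⟨c, hc'⟩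
    obtain ⟨d, hd⟩ := hyp
    have : x ^ e = (c * d⁻¹) ^ p := by
      simp only at hc' hd
      rw [mul_pow, inv_pow, hc', hd, mul_assoc, mul_inv_cancel₀ hy, mul_one]
    rw [← pow_mem_range_pow_of_coprime hc]
    exact ⟨c * d⁻¹, this.symm⟩
  · intro hxr
    obtain ⟨c, hc'⟩ := (pow_mem_range_pow_of_coprime hc x).mpr hxr
    obtain ⟨d, hd⟩ := hyp
    exact ⟨c * d, by simp [mul_pow, hc', hd]⟩

end Aux

theorem stmt15 (q d₁ d₂ : ℕ) (hd₁ : 2 ≤ d₁) (hd₂ : 2 ≤ d₂)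
    (hcop : Nat.gcd d₁ d₂ = 1) (hd₁4 : ¬ (4 ∣ d₁)) (hd₂4 : ¬ (4 ∣ d₂))
    (F : Type*) [Field F] [Fintype F] (hF : Fintype.card F = q)
    (a₁ a₂ : F) (ha₁ : a₁ ≠ 0) (ha₂ : a₂ ≠ 0) :
    Irreducible (X ^ (d₁ * d₂) - C (a₁ ^ d₂ * a₂ ^ d₁) : F[X]) ↔
      (Irreducible (X ^ d₁ - C a₁ : F[X]) ∧ Irreducible (X ^ d₂ - C a₂ : F[X])) := by
  have h4n : ¬ 4 ∣ d₁ * d₂ := by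
    intro h
    by_cases h1 : 2 ∣ d₁
    · have h2 : ¬ 2 ∣ d₂ := fun h2 ↦ by
        have := Nat.le_of_dvd (by omega) (Nat.dvd_gcd h1 h2); omega
      have hc : Nat.Coprime 4 d₂ := by
        have : Nat.Coprime 2 d₂ := (Nat.prime_two.coprime_iff_not_dvd).mpr h2
        simpa using this.pow_left 2
      exact hd₁4 (hc.dvd_of_dvd_mul_right h)
    · have hc : Nat.Coprime 4 d₁ := by
        have : Nat.Coprime 2 d₁ := (Nat.prime_two.coprime_iff_not_dvd).mpr h1
        simpa using this.pow_left 2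
      exact hd₂4 (hc.dvd_of_dvd_mul_left h)
  have key₁ : ∀ p : ℕ, p.Prime → p ∣ d₁ →
      ((a₁ ^ d₂ * a₂ ^ d₁ ∈ Set.range (· ^ p : F → F)) ↔ a₁ ∈ Set.range (· ^ p : F → F)) := by
    intro p hp hpd
    have hpe : ¬ p ∣ d₂ := fun h ↦ hp.ne_one (Nat.dvd_one.mp (hcop ▸ Nat.dvd_gcd hpd h))
    obtain ⟨k, hk⟩ := hpd
    exact my_range hp hpe ha₁ (pow_ne_zero _ ha₂)
      ⟨a₂ ^ k, by simp [hk, ← pow_mul, mul_comm]⟩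
  have key₂ : ∀ p : ℕ, p.Prime → p ∣ d₂ →
      ((a₁ ^ d₂ * a₂ ^ d₁ ∈ Set.range (· ^ p : F → F)) ↔ a₂ ∈ Set.range (· ^ p : F → F)) := by
    intro p hp hpd
    have hpe : ¬ p ∣ d₁ := fun h ↦ hp.ne_one (Nat.dvd_one.mp (hcop ▸ Nat.dvd_gcd h hpd))
    obtain ⟨k, hk⟩ := hpd
    rw [mul_comm (a₁ ^ d₂)]
    exact my_range hp hpe ha₂ (pow_ne_zero _ ha₁)
      ⟨a₁ ^ k, by simp [hk, ← pow_mul, mul_comm]⟩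
  rw [my_crit (by positivity) h4n, my_crit (by omega) hd₁4, my_crit (by omega) hd₂4]
  constructor
  · intro h
    refine ⟨fun p hp hpd b hb ↦ ?_, fun p hp hpd b hb ↦ ?_⟩
    · obtain ⟨c, hc⟩ := (key₁ p hp hpd).mpr ⟨b, hb⟩
      exact h p hp (hpd.mul_right d₂) c hc
    · obtain ⟨c, hc⟩ := (key₂ p hp hpd).mpr ⟨b, hb⟩
      exact h p hp (hpd.mul_left d₁) c hc
  · rintro ⟨h1, h2⟩ p hp hpd b hb
    rcases (Nat.Prime.dvd_mul hp).mp hpd with hp1 | hp2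
    · obtain ⟨c, hc⟩ := (key₁ p hp hp1).mp ⟨b, hb⟩
      exact h1 p hp hp1 c hc
    · obtain ⟨c, hc⟩ := (key₂ p hp hp2).mp ⟨b, hb⟩
      exact h2 p hp hp2 c hc
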